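/- arXiv:2301.00104 — 2 statements merged into one kernel-verified Lean document; each statement's English description precedes it below -/
import Mathlib

section
/- Let M_base : {0,1}^n → PMF(Y × ℝ) be a mechanism, let s ∈ ℝ be a threshold, T ∈ ℕ a number of steps, and γ ∈ (0,1] a stopping probability. Define the tuning mechanism M_tuning : {0,1}^n → PMF(Y ⊕ {⊥}) on input D as follows: for j = 1, …, T, sample (y, q) ← M_base(D); if q ≤ s, output y and halt; otherwise, with probability γ output ⊥ and halt; if no output has been produced after T iterations, output ⊥. If M_base is (ε, δ)-SDP and T ≥ 2/γ, then M_tuning is (2ε + 1, 10·e^{2ε}·δ/γ)-SDP. -/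
open scoped ENNReal

set_option maxHeartbeats 1000000
open scoped Classical

/-- Probability that a sample from `p` lands in `S`. -/
noncomputable def pr {Y : Type*} (p : PMF Y) (S : Set Y) : ℝ :=
  (p.toOuterMeasure S).toReal

/-- `(ε, δ)`-statistical differential privacy for mechanisms on bit-vector datasets. -/
def IsSDP {ι : Type*} [Fintype ι] {Y : Type*}
    (M : (ι → Bool) → PMF Y) (ε δ : ℝ) : Prop :=
  ∀ x x' : ι → Bool, hammingDist x x' = 1 →
    ∀ S : Set Y, pr (M x) S ≤ Real.exp ε * pr (M x') S + δ

/-- The hyperparameter-tuning loop: for up to `T` rounds, sample `(y, q)` from `Mb`;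
if `q ≤ s`, output `some y` and halt; otherwise with probability `γ` output `none`
(i.e. `⊥`) and halt; output `none` if no output was produced after `T` rounds. -/
noncomputable def tuningAux {Y : Type*} (Mb : PMF (Y × ℝ)) (s : ℝ)
    (γ : ℝ≥0∞) (hγ : γ ≤ 1) : ℕ → PMF (Option Y)
  | 0 => PMF.pure none
  | T + 1 => Mb.bind fun yq =>
      if yq.2 ≤ s then PMF.pure (some yq.1)
      else (PMF.bernoulli γ.toNNReal
        (by exact_mod_cast ENNReal.coe_toNNReal_le_self.trans hγ)).bind fun halt =>
        if halt then PMF.pure none else tuningAux Mb s γ hγ T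

lemma om_le_one {Y : Type*} (p : PMF Y) (S : Set Y) : p.toOuterMeasure S ≤ 1 := by
  rw [PMF.toOuterMeasure_apply]
  calc ∑' x, S.indicator p x ≤ ∑' x, p x :=
        ENNReal.tsum_le_tsum fun x => Set.indicator_le_self _ _ _
    _ = 1 := p.tsum_coe

lemma om_ne_top {Y : Type*} (p : PMF Y) (S : Set Y) : p.toOuterMeasure S ≠ ⊤ :=
  ne_top_of_le_ne_top ENNReal.one_ne_top (om_le_one p S)

lemma pr_nonneg {Y : Type*} (p : PMF Y) (S : Set Y) : 0 ≤ pr p S := ENNReal.toReal_nonneg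

lemma pr_le_one {Y : Type*} (p : PMF Y) (S : Set Y) : pr p S ≤ 1 := by
  have := om_le_one p S
  simpa [pr] using ENNReal.toReal_mono ENNReal.one_ne_top this

lemma om_add_compl {Y : Type*} (p : PMF Y) (S : Set Y) :
    p.toOuterMeasure S + p.toOuterMeasure Sᶜ = 1 := by
  rw [PMF.toOuterMeasure_apply, PMF.toOuterMeasure_apply, ← ENNReal.tsum_add]
  rw [← p.tsum_coe]
  refine tsum_congr fun x => ?_
  by_cases hx : x ∈ S <;> simp [Set.indicator_apply, hx]

lemma pr_compl {Y : Type*} (p : PMF Y) (S : Set Y) : pr p Sᶜ = 1 - pr p S := by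
  have h := om_add_compl p S
  have h2 := congrArg ENNReal.toReal h
  rw [ENNReal.toReal_add (om_ne_top p S) (om_ne_top p Sᶜ)] at h2
  simp only [ENNReal.toReal_one] at h2
  simp only [pr]; linarith

-- step lemma in ENNReal
lemma tuning_step {Y : Type*} (Mb : PMF (Y × ℝ)) (s : ℝ) (γe : ℝ≥0∞) (hγe : γe ≤ 1)
    (S : Set (Option Y)) (T : ℕ) :
    (tuningAux Mb s γe hγe (T + 1)).toOuterMeasure S =
      Mb.toOuterMeasure {yq | yq.2 ≤ s ∧ some yq.1 ∈ S}
      + Mb.toOuterMeasure {yq | ¬ yq.2 ≤ s} *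
        (γe * (if none ∈ S then 1 else 0) +
          (1 - γe) * (tuningAux Mb s γe hγe T).toOuterMeasure S) := by
  set C : ℝ≥0∞ := γe * (if none ∈ S then 1 else 0) +
      (1 - γe) * (tuningAux Mb s γe hγe T).toOuterMeasure S with hC
  have hγne : γe ≠ ⊤ := ne_top_of_le_ne_top ENNReal.one_ne_top hγe
  have hG : ((PMF.bernoulli γe.toNNReal
        (by exact_mod_cast ENNReal.coe_toNNReal_le_self.trans hγe)).bind fun halt =>
      if halt then PMF.pure none else tuningAux Mb s γe hγe T).toOuterMeasure S = C := by
    rw [PMF.toOuterMeasure_bind_apply, tsum_bool]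
    simp only [PMF.bernoulli_apply, Bool.cond_false, Bool.cond_true, if_true, if_false,
      PMF.toOuterMeasure_pure_apply, hC, Bool.false_eq_true, ENNReal.coe_sub, ENNReal.coe_one,
      ENNReal.coe_toNNReal hγne]
    ring
  show (Mb.bind _).toOuterMeasure S = _
  rw [PMF.toOuterMeasure_bind_apply]
  have key : ∀ yq : Y × ℝ,
      Mb yq * (if yq.2 ≤ s then PMF.pure (some yq.1) else
        (PMF.bernoulli γe.toNNReal
          (by exact_mod_cast ENNReal.coe_toNNReal_le_self.trans hγe)).bind fun halt =>
          if halt then PMF.pure none else tuningAux Mb s γe hγe T).toOuterMeasure S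
      = {yq : Y × ℝ | yq.2 ≤ s ∧ some yq.1 ∈ S}.indicator Mb yq
        + {yq : Y × ℝ | ¬ yq.2 ≤ s}.indicator Mb yq * C := by
    intro yq
    by_cases h1 : yq.2 ≤ s
    · by_cases h2 : some yq.1 ∈ S <;>
        simp [h1, h2, PMF.toOuterMeasure_pure_apply, Set.indicator_apply]
    · simp [h1, hG, Set.indicator_apply, not_le.mp h1]
  rw [tsum_congr key, ENNReal.tsum_add, ENNReal.tsum_mul_right,
    ← PMF.toOuterMeasure_apply, ← PMF.toOuterMeasure_apply]

lemma tuning_pr_succ {Y : Type*} (Mb : PMF (Y × ℝ)) (s : ℝ) (γr : ℝ)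
    (hγ0 : 0 ≤ γr) (hγ1 : ENNReal.ofReal γr ≤ 1)
    (S : Set (Option Y)) (T : ℕ) :
    pr (tuningAux Mb s (ENNReal.ofReal γr) hγ1 (T + 1)) S =
      pr Mb {yq | yq.2 ≤ s ∧ some yq.1 ∈ S}
      + pr Mb {yq | ¬ yq.2 ≤ s} *
        (γr * (if none ∈ S then 1 else 0) +
          (1 - γr) * pr (tuningAux Mb s (ENNReal.ofReal γr) hγ1 T) S) := by
  have h := tuning_step Mb s (ENNReal.ofReal γr) hγ1 S T
  have h2 := congrArg ENNReal.toReal h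
  have hfin1 : (ENNReal.ofReal γr * (if none ∈ S then 1 else 0) +
      (1 - ENNReal.ofReal γr) * (tuningAux Mb s (ENNReal.ofReal γr) hγ1 T).toOuterMeasure S) ≠ ⊤ := by
    apply ENNReal.add_ne_top.mpr
    constructor
    · exact ENNReal.mul_ne_top ENNReal.ofReal_ne_top (by split <;> simp)
    · exact ENNReal.mul_ne_top (by simp [ENNReal.sub_ne_top]) (om_ne_top _ _)
  rw [ENNReal.toReal_add (om_ne_top _ _) (ENNReal.mul_ne_top (om_ne_top _ _) hfin1),
    ENNReal.toReal_mul, ENNReal.toReal_add (ENNReal.mul_ne_top ENNReal.ofReal_ne_top (by split <;> simp))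
      (ENNReal.mul_ne_top (by simp [ENNReal.sub_ne_top]) (om_ne_top _ _)),
    ENNReal.toReal_mul, ENNReal.toReal_mul, ENNReal.toReal_ofReal hγ0,
    ENNReal.toReal_sub_of_le hγ1 ENNReal.one_ne_top, ENNReal.toReal_one,
    ENNReal.toReal_ofReal hγ0] at h2
  simp only [pr]
  rw [h2]
  congr 1
  · congr 2
    split <;> simp

lemma tuning_pr_zero {Y : Type*} (Mb : PMF (Y × ℝ)) (s : ℝ) (γe : ℝ≥0∞) (hγe : γe ≤ 1)
    (S : Set (Option Y)) :
    pr (tuningAux Mb s γe hγe 0) S = if none ∈ S then 1 else 0 := by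
  show ((PMF.pure (none : Option Y)).toOuterMeasure S).toReal = _
  rw [PMF.toOuterMeasure_pure_apply]
  split <;> simp

/-- closed form: `P T * f = α (1 - r^T) + χ (γ w + r^T (1-w))` -/
lemma tuning_pr_closed {Y : Type*} (Mb : PMF (Y × ℝ)) (s : ℝ) (γr : ℝ)
    (hγ0 : 0 ≤ γr) (hγ1 : ENNReal.ofReal γr ≤ 1)
    (S : Set (Option Y)) (T : ℕ) :
    pr (tuningAux Mb s (ENNReal.ofReal γr) hγ1 T) S *
        (1 - (1 - γr) * pr Mb {yq | ¬ yq.2 ≤ s}) =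
      pr Mb {yq | yq.2 ≤ s ∧ some yq.1 ∈ S} * (1 - ((1 - γr) * pr Mb {yq | ¬ yq.2 ≤ s}) ^ T)
      + (if none ∈ S then 1 else 0) *
        (γr * pr Mb {yq | ¬ yq.2 ≤ s} +
          ((1 - γr) * pr Mb {yq | ¬ yq.2 ≤ s}) ^ T * (1 - pr Mb {yq | ¬ yq.2 ≤ s})) := by
  set α := pr Mb {yq | yq.2 ≤ s ∧ some yq.1 ∈ S}
  set w := pr Mb {yq | ¬ yq.2 ≤ s}
  set χ : ℝ := if none ∈ S then 1 else 0
  induction T with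
  | zero =>
    rw [tuning_pr_zero]
    show χ * _ = _
    simp only [pow_zero]
    ring
  | succ T ih =>
    rw [tuning_pr_succ Mb s γr hγ0 hγ1 S T]
    show (α + w * (γr * χ + (1 - γr) * pr (tuningAux Mb s (ENNReal.ofReal γr) hγ1 T) S)) * (1 - (1-γr)*w) = _
    have expand : (α + w * (γr * χ + (1 - γr) * pr (tuningAux Mb s (ENNReal.ofReal γr) hγ1 T) S)) * (1 - (1-γr)*w)
        = α * (1 - (1-γr)*w) + w * γr * χ * (1 - (1-γr)*w)
          + w * (1-γr) * (pr (tuningAux Mb s (ENNReal.ofReal γr) hγ1 T) S * (1 - (1-γr)*w)) := by ring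
    rw [expand, ih]
    ring

lemma exp_neg_le_aux (u : ℝ) (hu : 0 < u) : Real.exp (-u) ≤ 1 / (u * Real.exp 1) := by
  have h2 : u ≤ Real.exp (u - 1) := by
    have h := Real.add_one_le_exp (u - 1); linarith
  have h1 : u * Real.exp 1 ≤ Real.exp u := by
    calc u * Real.exp 1 ≤ Real.exp (u - 1) * Real.exp 1 :=
          mul_le_mul_of_nonneg_right h2 (Real.exp_pos 1).le
      _ = Real.exp u := by rw [← Real.exp_add]; ring_nf
  rw [Real.exp_neg, one_div]
  exact inv_anti₀ (by positivity) h1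

lemma pow_one_sub_le_aux (f : ℝ) (hf0 : 0 ≤ f) (hf1 : f ≤ 1) (T : ℕ) (c : ℝ) (hc : 0 ≤ c)
    (hcT : c ≤ (T : ℝ)) : (1 - f) ^ T ≤ Real.exp (-(c * f)) := by
  have h1 : 1 - f ≤ Real.exp (-f) := by have := Real.add_one_le_exp (-f); linarith
  calc (1 - f) ^ T ≤ Real.exp (-f) ^ T := pow_le_pow_left₀ (by linarith) h1 T
    _ = Real.exp ((T : ℝ) * (-f)) := by rw [Real.exp_nat_mul]
    _ ≤ Real.exp (-(c * f)) := by
        apply Real.exp_le_exp.mpr; nlinarith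

/-- claims 1 and 2: per-round success-prob comparison -/
lemma core_claim12 (γ δ E x x' f f' : ℝ)
    (hγ0 : 0 < γ) (hδ0 : 0 ≤ δ) (hδγ : 10 * δ ≤ γ) (hE1 : 1 ≤ E)
    (hx'0 : 0 ≤ x') (hfγ : γ ≤ f) (hf'γ : γ ≤ f')
    (hx : x ≤ E * x' + δ) (hf' : f' ≤ E * f + 2 * δ) :
    x / f ≤ 5/4 * (E * E) * (x' / f') + δ / γ := by
  have hf0 : 0 < f := lt_of_lt_of_le hγ0 hfγ
  have hf'0 : 0 < f' := lt_of_lt_of_le hγ0 hf'γ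
  have hf'le : f' ≤ 5/4 * (E * f) := by linarith
  have key : x * (f' * γ) ≤ (5/4 * (E * E) * x' * γ + δ * f') * f := by
    nlinarith [mul_le_mul_of_nonneg_right hx (mul_pos hf'0 hγ0).le,
      mul_le_mul_of_nonneg_left hf'le (mul_nonneg (mul_nonneg (by linarith : (0:ℝ) ≤ E) hx'0) hγ0.le),
      mul_le_mul_of_nonneg_left hfγ (mul_nonneg hδ0 hf'0.le)]
  have h1 : x / f ≤ (5/4 * (E * E) * x' * γ + δ * f') / (f' * γ) :=
    (div_le_div_iff₀ hf0 (by positivity)).mpr key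
  have h2 : (5/4 * (E * E) * x' * γ + δ * f') / (f' * γ) = 5/4 * (E * E) * (x' / f') + δ / γ := by
    field_simp
  linarith

/-- claim 3: timeout-term comparison, algebraic part -/
lemma core_claim3 (γ δ E e1 w w' a a' f f' t : ℝ)
    (hγ0 : 0 < γ) (hγ1 : γ ≤ 1) (hδ0 : 0 ≤ δ) (hδγ : 10 * δ ≤ γ)
    (hE1 : 1 ≤ E) (he1 : 2.71 ≤ e1)
    (hw0 : 0 ≤ w) (hw1 : w ≤ 1) (hw'0 : 0 ≤ w') (hw'1 : w' ≤ 1)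
    (ha : a = 1 - w) (ha' : a' = 1 - w') (hf : f = a + γ * w) (hf' : f' = a' + γ * w')
    (ht0 : 0 ≤ t)
    (hww' : w ≤ E * w' + δ) (ha'a : a' ≤ E * a + δ)
    (hta : 1/2 ≤ w → t * a ≤ γ / (2 * e1 ^ 2))
    (htIIa : w ≤ 1/2 → t ≤ γ ^ 2 * w)
    (htIIb : 2/5 ≤ E * a → t ≤ 11/20 * (E * γ)) :
    t * a / f ≤ 11/10 * (E * E) * (γ * w' / f') + 8 * (E * E) * δ / γ := by
  have hE0 : (0:ℝ) < E := lt_of_lt_of_le one_pos hE1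
  have he1p : (0:ℝ) < e1 := by linarith
  have he2 : (7:ℝ) ≤ e1 ^ 2 := by nlinarith [sq_nonneg (e1 - 2.71)]
  have ha0 : 0 ≤ a := by rw [ha]; linarith
  have ha'0 : 0 ≤ a' := by rw [ha']; linarith
  have hfγ : γ ≤ f := by rw [hf, ha]; nlinarith
  have hf'γ : γ ≤ f' := by rw [hf', ha']; nlinarith
  have hf0 : 0 < f := lt_of_lt_of_le hγ0 hfγ
  have hf'0 : 0 < f' := lt_of_lt_of_le hγ0 hf'γ
  have hf'1 : f' ≤ 1 := by rw [hf', ha']; nlinarith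
  have haf : a ≤ f := by rw [hf]; nlinarith
  by_cases hm : E * a + δ ≤ 1/2
  · -- Case I : `a` is small
    have ha2 : a ≤ 1/2 := by nlinarith
    have hw2 : 1/2 ≤ w := by rw [ha] at ha2; linarith
    have hfa2 : a + γ/2 ≤ f := by rw [hf]; nlinarith
    have hw'2 : 1/2 ≤ w' := by rw [ha'] at ha'a; linarith [hm, ha'a]
    have hEγ : γ ≤ E * γ := le_mul_of_one_le_left hγ0.le hE1
    have hγw' : γ * w' ≤ γ := mul_le_of_le_one_right hγ0.le hw'1
    have hf'm : f' ≤ E * (a + 11/10 * γ) := by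
      rw [hf']
      have hexp : E * (a + 11/10 * γ) = E * a + 11/10 * (E * γ) := by ring
      rw [hexp]
      linarith
    have hstep1 : t * a / f ≤ (γ / (2 * e1 ^ 2)) / (a + γ/2) :=
      div_le_div₀ (by positivity) (hta hw2) (by positivity) hfa2
    have hq : (γ/2) / (E * (a + 11/10 * γ)) ≤ γ * w' / f' :=
      div_le_div₀ (by positivity) (by nlinarith [hw'2, hγ0.le]) hf'0 hf'm
    have hq2 : (γ / (2 * e1 ^ 2)) / (a + γ/2) ≤ 11/10 * (E * E) * ((γ/2) / (E * (a + 11/10 * γ))) := by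
      rw [← mul_div_assoc, div_le_div_iff₀ (by positivity) (by positivity),
        div_mul_eq_mul_div, div_le_iff₀ (by positivity)]
      -- γ * (E * (a + 11/10 γ)) ≤ 11/10 (E E) (γ/2) (a + γ/2) (2 e1²)
      have hXY0 : (0:ℝ) ≤ γ*a + γ*γ/2 := by positivity
      have h1 : γ*a + γ*γ/2 ≤ E*(γ*a + γ*γ/2) := le_mul_of_one_le_left hXY0 hE1
      have h2 : E*(γ*a + γ*γ/2) ≤ E*(E*(γ*a + γ*γ/2)) :=
        le_mul_of_one_le_left (by positivity) hE1
      have h3 : 7*(E*(E*(γ*a + γ*γ/2))) ≤ e1^2*(E*(E*(γ*a + γ*γ/2))) :=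
        mul_le_mul_of_nonneg_right he2 (by positivity)
      nlinarith [h1, h2, h3, mul_nonneg hγ0.le ha0, mul_pos hγ0 hγ0]
    have hq3 : 11/10 * (E * E) * ((γ/2) / (E * (a + 11/10 * γ))) ≤ 11/10 * (E * E) * (γ * w' / f') :=
      mul_le_mul_of_nonneg_left hq (by positivity)
    have hpos : (0:ℝ) ≤ 8 * (E * E) * δ / γ := by positivity
    linarith
  · -- Case II
    have htaf : t * a / f ≤ t := by
      rw [div_le_iff₀ hf0]
      exact mul_le_mul_of_nonneg_left haf ht0
    have htw : t ≤ 11/10 * (E * γ) * w := by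
      by_cases hw : w ≤ 1/2
      · have h := htIIa hw
        nlinarith
      · have hEa : 2/5 ≤ E * a := by nlinarith
        have h := htIIb hEa
        nlinarith
    have h1 : γ * w' ≤ γ * w' / f' := by
      rw [le_div_iff₀ hf'0]; nlinarith [mul_nonneg hγ0.le hw'0]
    have h4 : 11/10 * (E * E) * (γ * w') ≤ 11/10 * (E * E) * (γ * w' / f') :=
      mul_le_mul_of_nonneg_left h1 (by positivity)
    have h3 : γ * (w - δ) ≤ E * (γ * w') := by nlinarith
    have h5 : E * (γ * (w - δ)) ≤ E * (E * (γ * w')) := mul_le_mul_of_nonneg_left h3 hE0.le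
    have hγ2 : γ * γ ≤ 1 := by nlinarith
    have h6 : 11/10 * (E * (γ * δ)) ≤ 8 * (E * E) * δ / γ := by
      rw [le_div_iff₀ hγ0]
      nlinarith [mul_le_mul_of_nonneg_right hγ2 (mul_nonneg hE0.le hδ0),
        mul_le_mul_of_nonneg_right hE1 (mul_nonneg hE0.le hδ0)]
    nlinarith [htaf, htw, h4, h5, h6]

lemma fact_gen (γ : ℝ) (hγ0 : 0 < γ) (T : ℕ) (hT : 2/γ ≤ (T:ℝ))
    (v : ℝ) (hv0 : 0 ≤ v) (hv1 : v ≤ 1) (hγ1 : γ ≤ 1) :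
    ((1-γ)*v)^T ≤ Real.exp (-(2/γ * (1 - (1-γ)*v))) := by
  have h1 : (1-γ)*v = 1 - (1 - (1-γ)*v) := by ring
  conv_lhs => rw [h1]
  exact pow_one_sub_le_aux _ (by nlinarith [mul_le_of_le_one_right (by linarith : (0:ℝ) ≤ 1-γ) hv1])
    (by nlinarith [mul_nonneg (by linarith : (0:ℝ) ≤ 1-γ) hv0]) T _ (by positivity) hT

lemma fact_A (γ : ℝ) (hγ0 : 0 < γ) (hγ1 : γ ≤ 1) (T : ℕ) (hT : 2/γ ≤ (T:ℝ))
    (w : ℝ) (hw0 : 0 ≤ w) (hw1 : w ≤ 1) (hw2 : 1/2 ≤ w) :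
    ((1-γ)*w)^T * (1-w) ≤ γ / (2 * Real.exp 1 ^ 2) := by
  have he1p : (0:ℝ) < Real.exp 1 := Real.exp_pos 1
  have h1 := fact_gen γ hγ0 T hT w hw0 hw1 hγ1
  have hsplit : Real.exp (-(2/γ * (1 - (1-γ)*w)))
      = Real.exp (-(2*(1-w)/γ)) * Real.exp (-(2*w)) := by
    rw [← Real.exp_add]; congr 1; field_simp; ring
  have key1 : (1-w) * Real.exp (-(2*(1-w)/γ)) ≤ γ / (2 * Real.exp 1) := by
    rcases eq_or_lt_of_le (by linarith : (0:ℝ) ≤ 1 - w) with h | h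
    · rw [← h]; simp; positivity
    · have hb := exp_neg_le_aux (2*(1-w)/γ) (by positivity)
      have h2 : (1-w) * Real.exp (-(2*(1-w)/γ)) ≤ (1-w) * (1 / (2*(1-w)/γ * Real.exp 1)) :=
        mul_le_mul_of_nonneg_left hb (by linarith)
      have h3 : (1-w) * (1 / (2*(1-w)/γ * Real.exp 1)) = γ / (2 * Real.exp 1) := by
        field_simp
      linarith
  have key2 : Real.exp (-(2*w)) ≤ Real.exp (-1) := by
    apply Real.exp_le_exp.mpr; linarith
  have hfin : ((1-γ)*w)^T * (1-w) ≤ ((1-w) * Real.exp (-(2*(1-w)/γ))) * Real.exp (-(2*w)) := by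
    calc ((1-γ)*w)^T * (1-w) ≤ (Real.exp (-(2*(1-w)/γ)) * Real.exp (-(2*w))) * (1-w) := by
          rw [hsplit] at h1
          exact mul_le_mul_of_nonneg_right h1 (by linarith)
      _ = ((1-w) * Real.exp (-(2*(1-w)/γ))) * Real.exp (-(2*w)) := by ring
  have hcomb : ((1-w) * Real.exp (-(2*(1-w)/γ))) * Real.exp (-(2*w))
      ≤ (γ / (2 * Real.exp 1)) * Real.exp (-1) :=
    mul_le_mul key1 key2 (Real.exp_pos _).le (by positivity)
  have hlast : (γ / (2 * Real.exp 1)) * Real.exp (-1) = γ / (2 * Real.exp 1 ^ 2) := by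
    rw [Real.exp_neg, sq]
    rw [division_def, division_def, mul_inv]
    ring
  linarith

lemma fact_B (γ : ℝ) (hγ0 : 0 < γ) (hγ1 : γ ≤ 1) (T : ℕ) (hT : 2/γ ≤ (T:ℝ))
    (w : ℝ) (hw0 : 0 ≤ w) (hw : w ≤ 1/2) :
    ((1-γ)*w)^T ≤ γ^2 * w := by
  have he1p : (0:ℝ) < Real.exp 1 := Real.exp_pos 1
  have he1 : (2.71 : ℝ) ≤ Real.exp 1 := by linarith [Real.exp_one_gt_d9]
  have hr0 : 0 ≤ (1-γ)*w := mul_nonneg (by linarith) hw0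
  have hT2 : (2:ℝ) ≤ (T:ℝ) := by
    refine le_trans ?_ hT
    rw [le_div_iff₀ hγ0]; nlinarith
  have hTne : T ≠ 0 := by
    intro h; rw [h] at hT2; norm_num at hT2
  obtain ⟨k, rfl⟩ := Nat.exists_eq_succ_of_ne_zero hTne
  have hc0 : (0:ℝ) ≤ 2/γ - 1 := by
    rw [sub_nonneg, le_div_iff₀ hγ0]; nlinarith
  have hck : 2/γ - 1 ≤ (k:ℝ) := by
    push_cast at hT ⊢; linarith
  have hf12 : (1+γ)/2 ≤ 1 - (1-γ)*w := by nlinarith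
  have hrk : ((1-γ)*w)^k ≤ Real.exp (-((2/γ - 1) * (1 - (1-γ)*w))) := by
    have h1 : (1-γ)*w = 1 - (1 - (1-γ)*w) := by ring
    conv_lhs => rw [h1]
    exact pow_one_sub_le_aux _ (by nlinarith) (by nlinarith) k _ hc0 hck
  have hcf : 1/γ ≤ (2/γ - 1) * (1 - (1-γ)*w) := by
    have h2 : (2/γ - 1) * ((1+γ)/2) - 1/γ = (γ - γ^2)/(2*γ) := by
      field_simp; ring
    have h3 : (0:ℝ) ≤ (γ - γ^2)/(2*γ) := by
      apply div_nonneg (by nlinarith) (by linarith)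
    have h4 := mul_le_mul_of_nonneg_left hf12 hc0
    linarith
  have hrk2 : ((1-γ)*w)^k ≤ Real.exp (-(1/γ)) :=
    le_trans hrk (Real.exp_le_exp.mpr (by linarith))
  have hehalf : Real.exp (-(1/(2*γ))) ≤ γ := by
    have hb := exp_neg_le_aux (1/(2*γ)) (by positivity)
    have h5 : 1 / (1/(2*γ) * Real.exp 1) = 2*γ/Real.exp 1 := by field_simp
    have h6 : 2*γ/Real.exp 1 ≤ γ := by
      rw [div_le_iff₀ he1p]; nlinarith
    linarith [h5 ▸ hb]
  have hsq : Real.exp (-(1/γ)) = Real.exp (-(1/(2*γ))) ^ 2 := by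
    rw [sq, ← Real.exp_add]
    congr 1
    field_simp
    ring
  have hrk3 : ((1-γ)*w)^k ≤ γ^2 := by
    rw [hsq] at hrk2
    have : Real.exp (-(1/(2*γ))) ^ 2 ≤ γ ^ 2 :=
      pow_le_pow_left₀ (Real.exp_pos _).le hehalf 2
    linarith
  calc ((1-γ)*w)^(k+1) = ((1-γ)*w)^k * ((1-γ)*w) := by rw [pow_succ]
    _ ≤ γ^2 * w := mul_le_mul hrk3 (by nlinarith) hr0 (by positivity)

lemma fact_C (γ E : ℝ) (hγ0 : 0 < γ) (hγ1 : γ ≤ 1) (hE1 : 1 ≤ E) (T : ℕ) (hT : 2/γ ≤ (T:ℝ))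
    (w : ℝ) (hw0 : 0 ≤ w) (hw1 : w ≤ 1) (hEa : 2/5 ≤ E * (1-w)) :
    ((1-γ)*w)^T ≤ 11/20 * (E * γ) := by
  have he1p : (0:ℝ) < Real.exp 1 := Real.exp_pos 1
  have he1 : (2.71 : ℝ) ≤ Real.exp 1 := by linarith [Real.exp_one_gt_d9]
  have hE0 : (0:ℝ) < E := by linarith
  have h1 := fact_gen γ hγ0 T hT w hw0 hw1 hγ1
  have ha4 : 4/(5*(E*γ)) ≤ 2*(1-w)/γ := by
    rw [div_le_div_iff₀ (by positivity) hγ0]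
    nlinarith
  have h2 : Real.exp (-(2/γ * (1 - (1-γ)*w))) ≤ Real.exp (-(4/(5*(E*γ)))) := by
    apply Real.exp_le_exp.mpr
    have hstep : 2*(1-w)/γ ≤ 2/γ * (1 - (1-γ)*w) := by
      rw [div_le_iff₀ hγ0]
      have haf : (1-w) ≤ 1 - (1-γ)*w := by nlinarith
      have h' := mul_le_mul_of_nonneg_left haf (by positivity : (0:ℝ) ≤ 2/γ)
      calc 2*(1-w) = 2/γ * (1-w) * γ := by field_simp
        _ ≤ 2/γ * (1 - (1-γ)*w) * γ := mul_le_mul_of_nonneg_right h' hγ0.le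
    linarith [ha4]
  have h3 := exp_neg_le_aux (4/(5*(E*γ))) (by positivity)
  have h4 : 1 / (4/(5*(E*γ)) * Real.exp 1) = 5*(E*γ)/(4*Real.exp 1) := by
    field_simp
  have h5 : 5*(E*γ)/(4*Real.exp 1) ≤ 11/20 * (E*γ) := by
    rw [div_le_iff₀ (by positivity)]
    nlinarith [mul_pos hE0 hγ0]
  linarith [h1, h2, h3, h4 ▸ h3]

lemma fact_t' (γ : ℝ) (hγ0 : 0 < γ) (hγ1 : γ ≤ 1) (T : ℕ) (hT : 2/γ ≤ (T:ℝ))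
    (w' : ℝ) (hw'0 : 0 ≤ w') (hw'1 : w' ≤ 1) :
    ((1-γ)*w')^T ≤ Real.exp (-2) := by
  have h1 := fact_gen γ hγ0 T hT w' hw'0 hw'1 hγ1
  refine le_trans h1 (Real.exp_le_exp.mpr ?_)
  have hf'γ : γ ≤ 1 - (1-γ)*w' := by nlinarith [mul_le_of_le_one_right (by linarith : (0:ℝ) ≤ 1-γ) hw'1]
  have h2 := mul_le_mul_of_nonneg_left hf'γ (by positivity : (0:ℝ) ≤ 2/γ)
  have h3 : 2/γ * γ = 2 := by field_simp
  linarith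

lemma fact_q7 : Real.exp (-2) ≤ 1/7 := by
  have he1 : (2.71 : ℝ) ≤ Real.exp 1 := by linarith [Real.exp_one_gt_d9]
  have h1 : Real.exp 2 = Real.exp 1 * Real.exp 1 := by
    rw [← Real.exp_add]; norm_num
  have h2 : (7:ℝ) ≤ Real.exp 2 := by nlinarith
  rw [Real.exp_neg]
  rw [inv_le_comm₀ (by positivity) (by norm_num)]
  linarith

lemma final_comb (e1 q EE X W D L1 L2 L3 χ : ℝ)
    (hq : q ≤ 1/7) (hq0 : 0 < q) (he1 : 2.71 ≤ e1) (hEE : 1 ≤ EE)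
    (hX : 0 ≤ X) (hW : 0 ≤ W) (hD : 0 ≤ D) (hχ : χ = 0 ∨ χ = 1)
    (h1 : L1 ≤ 5/4 * EE * X + D) (h2 : L2 ≤ 5/4 * EE * W + D)
    (h3 : L3 ≤ 11/10 * EE * W + 8 * EE * D) :
    L1 + χ * L2 + χ * L3 ≤ EE * e1 * ((1 - q) * X + χ * W) + 10 * EE * D := by
  have hEE0 : (0:ℝ) < EE := by linarith
  have hcoef : (5:ℝ)/4 ≤ e1 * (1 - q) := by
    nlinarith [mul_le_mul he1 (by linarith : (6:ℝ)/7 ≤ 1 - q) (by norm_num)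
      (by linarith : (0:ℝ) ≤ e1)]
  have hP : 0 ≤ EE * X := mul_nonneg hEE0.le hX
  have hQ : 0 ≤ EE * W := mul_nonneg hEE0.le hW
  have k1 : 5/4 * (EE * X) ≤ e1 * (1 - q) * (EE * X) := mul_le_mul_of_nonneg_right hcoef hP
  have k2 : (5/4 + 11/10) * (EE * W) ≤ e1 * (EE * W) :=
    mul_le_mul_of_nonneg_right (by linarith) hQ
  have k3 : 1 * D ≤ EE * D := mul_le_mul_of_nonneg_right hEE hD
  rcases hχ with h | h <;> subst h
  · nlinarith [k1, k3]
  · nlinarith [k1, k2, k3]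

lemma core_main (γ ε δ : ℝ) (T : ℕ)
    (hγ0 : 0 < γ) (hγ1 : γ ≤ 1) (hε : 0 < ε) (hδ0 : 0 ≤ δ) (hδγ : 10 * δ ≤ γ)
    (hT : 2 / γ ≤ (T : ℝ))
    (α w α' w' χ : ℝ)
    (hα0 : 0 ≤ α) (hα'0 : 0 ≤ α') (hw0 : 0 ≤ w) (hw1 : w ≤ 1)
    (hw'0 : 0 ≤ w') (hw'1 : w' ≤ 1)
    (hχ : χ = 0 ∨ χ = 1)
    (hαα' : α ≤ Real.exp ε * α' + δ)
    (hww' : w ≤ Real.exp ε * w' + δ)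
    (hw'w : w' ≤ Real.exp ε * w + δ)
    (ha'a : 1 - w' ≤ Real.exp ε * (1 - w) + δ) :
    (α * (1 - ((1-γ)*w)^T) + χ * (γ*w + ((1-γ)*w)^T * (1-w))) / (1 - (1-γ)*w)
      ≤ Real.exp (2*ε+1) *
          ((α' * (1 - ((1-γ)*w')^T) + χ * (γ*w' + ((1-γ)*w')^T * (1-w'))) / (1 - (1-γ)*w'))
        + 10 * Real.exp (2*ε) * δ / γ := by
  have hE1 : 1 ≤ Real.exp ε := by nlinarith [Real.add_one_le_exp ε]
  have hE0 : (0:ℝ) < Real.exp ε := Real.exp_pos ε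
  have he1 : (2.71 : ℝ) ≤ Real.exp 1 := by linarith [Real.exp_one_gt_d9]
  have he1p : (0:ℝ) < Real.exp 1 := Real.exp_pos 1
  have hr0 : 0 ≤ (1-γ)*w := mul_nonneg (by linarith) hw0
  have hr'0 : 0 ≤ (1-γ)*w' := mul_nonneg (by linarith) hw'0
  have hr1 : (1-γ)*w ≤ 1 - γ := mul_le_of_le_one_right (by linarith) hw1
  have hr'1 : (1-γ)*w' ≤ 1 - γ := mul_le_of_le_one_right (by linarith) hw'1
  have hfγ : γ ≤ 1 - (1-γ)*w := by linarith
  have hf'γ : γ ≤ 1 - (1-γ)*w' := by linarith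
  have hf0 : (0:ℝ) < 1 - (1-γ)*w := lt_of_lt_of_le hγ0 hfγ
  have hf'0 : (0:ℝ) < 1 - (1-γ)*w' := lt_of_lt_of_le hγ0 hf'γ
  have ht0 : 0 ≤ ((1-γ)*w)^T := pow_nonneg hr0 T
  have ht'0 : 0 ≤ ((1-γ)*w')^T := pow_nonneg hr'0 T
  have hχ0 : 0 ≤ χ := by rcases hχ with h | h <;> simp [h]
  -- claims
  have hf'Ef : 1 - (1-γ)*w' ≤ Real.exp ε * (1 - (1-γ)*w) + 2*δ := by
    have h1 : γ*w' ≤ γ*(Real.exp ε * w + δ) := mul_le_mul_of_nonneg_left hw'w hγ0.le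
    nlinarith [mul_nonneg (mul_nonneg hE0.le hγ0.le) hw0, mul_nonneg hγ0.le hδ0]
  have c1 : α / (1 - (1-γ)*w) ≤
      5/4 * (Real.exp ε * Real.exp ε) * (α' / (1 - (1-γ)*w')) + δ/γ :=
    core_claim12 γ δ (Real.exp ε) α α' _ _ hγ0 hδ0 hδγ hE1 hα'0 hfγ hf'γ hαα' hf'Ef
  have c2 : γ*w / (1 - (1-γ)*w) ≤
      5/4 * (Real.exp ε * Real.exp ε) * (γ*w' / (1 - (1-γ)*w')) + δ/γ := by
    refine core_claim12 γ δ (Real.exp ε) (γ*w) (γ*w') _ _ hγ0 hδ0 hδγ hE1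
      (mul_nonneg hγ0.le hw'0) hfγ hf'γ ?_ hf'Ef
    have h1 : γ*w ≤ γ*(Real.exp ε * w' + δ) := mul_le_mul_of_nonneg_left hww' hγ0.le
    nlinarith [mul_nonneg hγ0.le hδ0]
  have c3 : ((1-γ)*w)^T * (1-w) / (1 - (1-γ)*w) ≤
      11/10 * (Real.exp ε * Real.exp ε) * (γ*w' / (1 - (1-γ)*w')) +
        8 * (Real.exp ε * Real.exp ε) * δ / γ := by
    refine core_claim3 γ δ (Real.exp ε) (Real.exp 1) w w' (1-w) (1-w') _ _ _
      hγ0 hγ1 hδ0 hδγ hE1 he1 hw0 hw1 hw'0 hw'1 rfl rfl (by ring) (by ring) ht0 hww'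
      (by linarith) ?_ ?_ ?_
    · exact fun h => fact_A γ hγ0 hγ1 T hT w hw0 hw1 h
    · exact fun h => fact_B γ hγ0 hγ1 T hT w hw0 h
    · exact fun h => fact_C γ (Real.exp ε) hγ0 hγ1 hE1 T hT w hw0 hw1 h
  -- LHS upper bound
  have hLnum : α * (1 - ((1-γ)*w)^T) + χ * (γ*w + ((1-γ)*w)^T * (1-w))
      ≤ α + χ*(γ*w) + χ*(((1-γ)*w)^T * (1-w)) := by
    nlinarith [mul_nonneg hα0 ht0]
  have hL : (α * (1 - ((1-γ)*w)^T) + χ * (γ*w + ((1-γ)*w)^T * (1-w))) / (1 - (1-γ)*w)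
      ≤ α / (1 - (1-γ)*w) + χ*(γ*w / (1 - (1-γ)*w)) +
        χ*(((1-γ)*w)^T * (1-w) / (1 - (1-γ)*w)) := by
    have := (div_le_div_iff_of_pos_right hf0).mpr hLnum
    calc (α * (1 - ((1-γ)*w)^T) + χ * (γ*w + ((1-γ)*w)^T * (1-w))) / (1 - (1-γ)*w)
        ≤ (α + χ*(γ*w) + χ*(((1-γ)*w)^T * (1-w))) / (1 - (1-γ)*w) := this
      _ = α / (1 - (1-γ)*w) + χ*(γ*w / (1 - (1-γ)*w)) +
          χ*(((1-γ)*w)^T * (1-w) / (1 - (1-γ)*w)) := by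
          ring
  -- RHS lower bound
  have ht'e : ((1-γ)*w')^T ≤ Real.exp (-2) := fact_t' γ hγ0 hγ1 T hT w' hw'0 hw'1
  have hRnum : (1 - Real.exp (-2))*α' + χ*(γ*w')
      ≤ α' * (1 - ((1-γ)*w')^T) + χ * (γ*w' + ((1-γ)*w')^T * (1-w')) := by
    nlinarith [mul_le_mul_of_nonneg_left ht'e hα'0,
      mul_nonneg (mul_nonneg hχ0 ht'0) (by linarith : (0:ℝ) ≤ 1 - w')]
  have hR : (1 - Real.exp (-2))*(α' / (1 - (1-γ)*w')) + χ*(γ*w' / (1 - (1-γ)*w'))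
      ≤ (α' * (1 - ((1-γ)*w')^T) + χ * (γ*w' + ((1-γ)*w')^T * (1-w'))) / (1 - (1-γ)*w') := by
    have h1 := (div_le_div_iff_of_pos_right hf'0).mpr hRnum
    calc (1 - Real.exp (-2))*(α' / (1 - (1-γ)*w')) + χ*(γ*w' / (1 - (1-γ)*w'))
        = ((1 - Real.exp (-2))*α' + χ*(γ*w')) / (1 - (1-γ)*w') := by
          ring
      _ ≤ _ := h1
  -- final combination
  have hexp21 : Real.exp (2*ε+1) = (Real.exp ε * Real.exp ε) * Real.exp 1 := by
    rw [Real.exp_add, two_mul, Real.exp_add]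
  have hexp2 : Real.exp (2*ε) = Real.exp ε * Real.exp ε := by
    rw [two_mul, Real.exp_add]
  have hX0 : 0 ≤ α' / (1 - (1-γ)*w') := div_nonneg hα'0 hf'0.le
  have hW0 : 0 ≤ γ*w' / (1 - (1-γ)*w') := div_nonneg (mul_nonneg hγ0.le hw'0) hf'0.le
  have hD0 : 0 ≤ δ/γ := div_nonneg hδ0 hγ0.le
  have hEE1 : 1 ≤ Real.exp ε * Real.exp ε := by nlinarith
  have hc1' : α / (1 - (1-γ)*w) ≤
      5/4 * (Real.exp ε * Real.exp ε) * (α' / (1 - (1-γ)*w')) + δ/γ := c1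
  have hc3' : ((1-γ)*w)^T * (1-w) / (1 - (1-γ)*w) ≤
      11/10 * (Real.exp ε * Real.exp ε) * (γ*w' / (1 - (1-γ)*w')) +
        8 * (Real.exp ε * Real.exp ε) * (δ/γ) := by
    have heq : 8 * (Real.exp ε * Real.exp ε) * δ / γ
        = 8 * (Real.exp ε * Real.exp ε) * (δ/γ) := by
      rw [mul_div_assoc]
    linarith [heq ▸ c3]
  have hcomb := final_comb (Real.exp 1) (Real.exp (-2)) (Real.exp ε * Real.exp ε)
    (α' / (1 - (1-γ)*w')) (γ*w' / (1 - (1-γ)*w')) (δ/γ)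
    (α / (1 - (1-γ)*w)) (γ*w / (1 - (1-γ)*w)) (((1-γ)*w)^T * (1-w) / (1 - (1-γ)*w)) χ
    fact_q7 (Real.exp_pos _) he1 hEE1 hX0 hW0 hD0 hχ hc1' c2 hc3'
  have heq10 : 10 * (Real.exp ε * Real.exp ε) * δ / γ
      = 10 * (Real.exp ε * Real.exp ε) * (δ/γ) := by rw [mul_div_assoc]
  rw [hexp21, hexp2, heq10]
  have hRscaled := mul_le_mul_of_nonneg_left hR
    (by positivity : (0:ℝ) ≤ (Real.exp ε * Real.exp ε) * Real.exp 1)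
  calc (α * (1 - ((1-γ)*w)^T) + χ * (γ*w + ((1-γ)*w)^T * (1-w))) / (1 - (1-γ)*w)
      ≤ α / (1 - (1-γ)*w) + χ*(γ*w / (1 - (1-γ)*w)) +
        χ*(((1-γ)*w)^T * (1-w) / (1 - (1-γ)*w)) := hL
    _ ≤ (Real.exp ε * Real.exp ε) * Real.exp 1 *
          ((1 - Real.exp (-2)) * (α' / (1 - (1-γ)*w')) + χ * (γ*w' / (1 - (1-γ)*w'))) +
        10 * (Real.exp ε * Real.exp ε) * (δ/γ) := hcomb
    _ ≤ _ := by linarith [hRscaled]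

/-- DP hyperparameter tuning (Liu–Talwar): if `M_base` is `(ε, δ)`-SDP and `T ≥ 2/γ`,
then the tuning mechanism is `(2ε + 1, 10 e^{2ε} δ / γ)`-SDP. -/
theorem dp_hyperparameter_tuning {n : ℕ} {Y : Type*}
    (Mbase : (Fin n → Bool) → PMF (Y × ℝ)) (s : ℝ) (T : ℕ)
    (γ : ℝ) (hγ0 : 0 < γ) (hγ1 : γ ≤ 1)
    (ε δ : ℝ) (hε : 0 < ε) (hδ : 0 ≤ δ)
    (hT : 2 / γ ≤ (T : ℝ))
    (hbase : IsSDP Mbase ε δ) :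
    IsSDP (fun D => tuningAux (Mbase D) s (ENNReal.ofReal γ)
        (ENNReal.ofReal_le_one.mpr hγ1) T)
      (2 * ε + 1) (10 * Real.exp (2 * ε) * δ / γ) := by
  intro x x' hadj S
  have hE2 : (1:ℝ) ≤ Real.exp (2*ε) := Real.one_le_exp (by linarith)
  by_cases hcase : 10 * δ ≤ γ
  · -- main case
    have hadj' : hammingDist x' x = 1 := by rwa [hammingDist_comm]
    set Mx := Mbase x
    set Mx' := Mbase x'
    have hcompl : ({yq : Y × ℝ | yq.2 ≤ s}) = ({yq : Y × ℝ | ¬ yq.2 ≤ s})ᶜ := by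
      ext yq; simp
    -- quantities
    have hαα' := hbase x x' hadj {yq | yq.2 ≤ s ∧ some yq.1 ∈ S}
    have hww' := hbase x x' hadj {yq | ¬ yq.2 ≤ s}
    have hw'w := hbase x' x hadj' {yq | ¬ yq.2 ≤ s}
    have ha'a := hbase x' x hadj' {yq | yq.2 ≤ s}
    rw [hcompl, pr_compl, pr_compl] at ha'a
    have hw1 : pr Mx {yq | ¬ yq.2 ≤ s} ≤ 1 := pr_le_one _ _
    have hw'1 : pr Mx' {yq | ¬ yq.2 ≤ s} ≤ 1 := pr_le_one _ _
    have hw0 : 0 ≤ pr Mx {yq | ¬ yq.2 ≤ s} := pr_nonneg _ _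
    have hw'0 : 0 ≤ pr Mx' {yq | ¬ yq.2 ≤ s} := pr_nonneg _ _
    have hr1 : (1-γ) * pr Mx {yq | ¬ yq.2 ≤ s} ≤ 1 - γ :=
      mul_le_of_le_one_right (by linarith) hw1
    have hr'1 : (1-γ) * pr Mx' {yq | ¬ yq.2 ≤ s} ≤ 1 - γ :=
      mul_le_of_le_one_right (by linarith) hw'1
    have hf0 : (0:ℝ) < 1 - (1-γ) * pr Mx {yq | ¬ yq.2 ≤ s} := by linarith
    have hf'0 : (0:ℝ) < 1 - (1-γ) * pr Mx' {yq | ¬ yq.2 ≤ s} := by linarith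
    have hclosed := tuning_pr_closed Mx s γ hγ0.le (ENNReal.ofReal_le_one.mpr hγ1) S T
    have hclosed' := tuning_pr_closed Mx' s γ hγ0.le (ENNReal.ofReal_le_one.mpr hγ1) S T
    have hP : pr (tuningAux Mx s (ENNReal.ofReal γ) (ENNReal.ofReal_le_one.mpr hγ1) T) S
        = (pr Mx {yq | yq.2 ≤ s ∧ some yq.1 ∈ S} *
            (1 - ((1-γ) * pr Mx {yq | ¬ yq.2 ≤ s}) ^ T)
          + (if none ∈ S then (1:ℝ) else 0) *
            (γ * pr Mx {yq | ¬ yq.2 ≤ s} +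
              ((1-γ) * pr Mx {yq | ¬ yq.2 ≤ s}) ^ T * (1 - pr Mx {yq | ¬ yq.2 ≤ s}))) /
          (1 - (1-γ) * pr Mx {yq | ¬ yq.2 ≤ s}) := by
      rw [eq_div_iff (ne_of_gt hf0)]
      exact hclosed
    have hP' : pr (tuningAux Mx' s (ENNReal.ofReal γ) (ENNReal.ofReal_le_one.mpr hγ1) T) S
        = (pr Mx' {yq | yq.2 ≤ s ∧ some yq.1 ∈ S} *
            (1 - ((1-γ) * pr Mx' {yq | ¬ yq.2 ≤ s}) ^ T)
          + (if none ∈ S then (1:ℝ) else 0) *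
            (γ * pr Mx' {yq | ¬ yq.2 ≤ s} +
              ((1-γ) * pr Mx' {yq | ¬ yq.2 ≤ s}) ^ T * (1 - pr Mx' {yq | ¬ yq.2 ≤ s}))) /
          (1 - (1-γ) * pr Mx' {yq | ¬ yq.2 ≤ s}) := by
      rw [eq_div_iff (ne_of_gt hf'0)]
      exact hclosed'
    show pr (tuningAux Mx s (ENNReal.ofReal γ) (ENNReal.ofReal_le_one.mpr hγ1) T) S
      ≤ Real.exp (2*ε+1) *
          pr (tuningAux Mx' s (ENNReal.ofReal γ) (ENNReal.ofReal_le_one.mpr hγ1) T) S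
        + 10 * Real.exp (2*ε) * δ / γ
    rw [hP, hP']
    exact core_main γ ε δ T hγ0 hγ1 hε hδ hcase hT
      (pr Mx {yq | yq.2 ≤ s ∧ some yq.1 ∈ S}) (pr Mx {yq | ¬ yq.2 ≤ s})
      (pr Mx' {yq | yq.2 ≤ s ∧ some yq.1 ∈ S}) (pr Mx' {yq | ¬ yq.2 ≤ s})
      (if none ∈ S then 1 else 0)
      (pr_nonneg _ _) (pr_nonneg _ _) hw0 hw1 hw'0 hw'1
      (by split <;> simp) hαα' hww' hw'w ha'a
  · -- trivial case : δ > γ/10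
    push_neg at hcase
    have h1 : (1:ℝ) ≤ 10 * Real.exp (2*ε) * δ / γ := by
      rw [le_div_iff₀ hγ0]
      nlinarith
    have h2 : (0:ℝ) ≤ Real.exp (2*ε+1) *
        pr (tuningAux (Mbase x') s (ENNReal.ofReal γ) (ENNReal.ofReal_le_one.mpr hγ1) T) S :=
      mul_nonneg (Real.exp_pos _).le (pr_nonneg _ _)
    have h3 := pr_le_one (tuningAux (Mbase x) s (ENNReal.ofReal γ) (ENNReal.ofReal_le_one.mpr hγ1) T) S
    simp only []
    linarith
end

section
/- For all constants ε > 0 and α > 0 there exists N ∈ ℕ such that for all n ≥ N and every τ with 0 ≤ τ ≤ n^{0.9}: no mechanism M : {0,1}^n → PMF({0,1}^n → Bool) that is (ε, n^{−27})-SDP is α-useful for the low-diameter-set utility u^LDS_τ, where u^LDS_τ(x, C) = 1 iff C(x) = 1 and every z ∈ {0,1}^n with ‖z − x‖₁ > τ satisfies C(z) = 0. -/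
open scoped ENNReal

lemma pr_eq_sum {Y : Type*} [Fintype Y] (p : PMF Y) (S : Set Y) [DecidablePred (· ∈ S)] :
    pr p S = ∑ c, if c ∈ S then (p c).toReal else 0 := by
  unfold pr
  rw [PMF.toOuterMeasure_apply, tsum_fintype,
    ENNReal.toReal_sum (fun a _ => ?_)]
  · refine Finset.sum_congr rfl fun c _ => ?_
    by_cases h : c ∈ S <;> simp [Set.indicator_apply, h]
  · by_cases h : a ∈ S <;> simp [Set.indicator_apply, h, PMF.apply_ne_top]

lemma pr_mono {Y : Type*} [Fintype Y] (p : PMF Y) {S T : Set Y} (h : S ⊆ T) :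
    pr p S ≤ pr p T := by
  classical
  rw [pr_eq_sum, pr_eq_sum]
  refine Finset.sum_le_sum fun c _ => ?_
  by_cases hc : c ∈ S
  · simp [hc, h hc]
  · simp only [hc, if_false]
    split <;> positivity

lemma sum_toReal_one {Y : Type*} [Fintype Y] (p : PMF Y) :
    ∑ c, (p c).toReal = 1 := by
  rw [← ENNReal.toReal_sum (fun a _ => PMF.apply_ne_top p a), ← tsum_fintype (L := .unconditional _), PMF.tsum_coe,
    ENNReal.toReal_one]

/-- No `(ε, n^{-27})`-SDP mechanism outputting circuits (Boolean functions on `{0,1}^n`)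
is `α`-useful for the low-diameter-set utility `u^LDS_τ` with `τ ≤ n^{0.9}`,
for all sufficiently large `n`. Here `u^LDS_τ(x, C) = 1` iff `C(x) = 1` and `C(z) = 0`
for every `z` at distance greater than `τ` from `x`. -/
theorem no_sdp_for_lds (ε α : ℝ) (hε : 0 < ε) (hα : 0 < α) :
    ∃ N : ℕ, ∀ n ≥ N, ∀ τ : ℕ, (τ : ℝ) ≤ (n : ℝ) ^ (0.9 : ℝ) →
      ∀ M : (Fin n → Bool) → PMF ((Fin n → Bool) → Bool),
        IsSDP M ε (1 / (n : ℝ) ^ (27 : ℕ)) →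
        ¬ (∀ x : Fin n → Bool,
            α ≤ pr (M x)
              {C | C x = true ∧ ∀ z : Fin n → Bool, τ < hammingDist z x → C z = false}) := by
  classical
  set E : ℝ := Real.exp ε with hE
  have hE0 : 0 < E := Real.exp_pos ε
  set K : ℝ := max 1 (2 * (α + 2 * E + 1) / α) with hK
  have hK1 : 1 ≤ K := le_max_left _ _
  have hK0 : 0 ≤ K := by linarith
  refine ⟨⌈K ^ (10 : ℕ)⌉₊, fun n hn τ hτ M hSDP hU => ?_⟩
  -- basic numeric facts
  have hnK : K ^ (10 : ℕ) ≤ (n : ℝ) := le_trans (Nat.le_ceil _) (Nat.cast_le.mpr hn)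
  have hn1 : (1 : ℝ) ≤ (n : ℝ) := le_trans (one_le_pow₀ hK1) hnK
  have hn0 : (0 : ℝ) < (n : ℝ) := by linarith
  have hn01 : K ≤ (n : ℝ) ^ (0.1 : ℝ) := by
    have h1 : (K ^ (10 : ℕ) : ℝ) ^ (0.1 : ℝ) ≤ (n : ℝ) ^ (0.1 : ℝ) :=
      Real.rpow_le_rpow (by positivity) hnK (by norm_num)
    calc K = (K ^ (10 : ℕ)) ^ (0.1 : ℝ) := by
              rw [← Real.rpow_natCast K 10, ← Real.rpow_mul hK0]
              norm_num
      _ ≤ _ := h1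
  have hsplit : (n : ℝ) ^ (0.1 : ℝ) * (n : ℝ) ^ (0.9 : ℝ) = (n : ℝ) := by
    rw [← Real.rpow_add hn0]
    norm_num
  have h09one : (1 : ℝ) ≤ (n : ℝ) ^ (0.9 : ℝ) :=
    Real.one_le_rpow hn1 (by norm_num)
  have hτn : τ ≤ n := by
    have : (τ : ℝ) ≤ (n : ℝ) := by
      refine hτ.trans ?_
      calc (n : ℝ) ^ (0.9 : ℝ) ≤ (n : ℝ) ^ (1 : ℝ) :=
            Real.rpow_le_rpow_of_exponent_le hn1 (by norm_num)
        _ = (n : ℝ) := Real.rpow_one _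
    exact_mod_cast this
  set δ : ℝ := 1 / (n : ℝ) ^ (27 : ℕ) with hδ
  have hδ0 : 0 ≤ δ := by positivity
  have hnδ : (n : ℝ) * δ ≤ 1 := by
    rw [hδ]
    rw [mul_one_div, div_le_one (by positivity)]
    calc (n : ℝ) = (n : ℝ) ^ (1 : ℕ) := (pow_one _).symm
      _ ≤ (n : ℝ) ^ (27 : ℕ) := pow_le_pow_right₀ hn1 (by norm_num)
  -- the reconstruction function
  set hatx : ((Fin n → Bool) → Bool) → (Fin n → Bool) :=
    fun C => if h : ∃ z, C z = true then h.choose else (fun _ => false) with hhatx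
  have hhat : ∀ (C : (Fin n → Bool) → Bool) (x : Fin n → Bool),
      C x = true → C (hatx C) = true := by
    intro C x hx
    have h : ∃ z, C z = true := ⟨x, hx⟩
    simp only [hhatx, dif_pos h]
    exact h.choose_spec
  -- sets
  set U : (Fin n → Bool) → Set ((Fin n → Bool) → Bool) :=
    fun x => {C | C x = true ∧ ∀ z : Fin n → Bool, τ < hammingDist z x → C z = false} with hUdef
  set S : (Fin n → Bool) → Fin n → Set ((Fin n → Bool) → Bool) :=
    fun x i => {C | hatx C i = x i ∧ hammingDist (hatx C) x ≤ τ} with hSdef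
  set T : (Fin n → Bool) → Fin n → Set ((Fin n → Bool) → Bool) :=
    fun y i => {C | hatx C i ≠ y i ∧ hammingDist (hatx C) y ≤ τ + 1} with hTdef
  set flip : Fin n → (Fin n → Bool) → (Fin n → Bool) :=
    fun i x => Function.update x i (!x i) with hflip
  have hflipdist : ∀ (i : Fin n) (x : Fin n → Bool), hammingDist x (flip i x) = 1 := by
    intro i x
    rw [hammingDist, Finset.card_eq_one]
    refine ⟨i, ?_⟩
    ext j
    simp only [Finset.mem_filter, Finset.mem_univ, true_and, Finset.mem_singleton, hflip]
    constructor
    · intro hj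
      by_contra hji
      exact hj (by rw [Function.update_of_ne hji])
    · rintro rfl
      simp
  have hflipflip : ∀ (i : Fin n) (x : Fin n → Bool), flip i (flip i x) = x := by
    intro i x
    simp [hflip, Function.update_idem, Function.update_self, Bool.not_not,
      Function.update_eq_self]
  have hflipbij : ∀ i : Fin n, Function.Bijective (flip i) :=
    fun i => Function.Involutive.bijective (hflipflip i)
  have hST : ∀ (x : Fin n → Bool) (i : Fin n), S x i ⊆ T (flip i x) i := by
    intro x i C hC
    obtain ⟨h1, h2⟩ := hC
    constructor
    · rw [h1]
      simp [hflip, Function.update_self]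
    · calc hammingDist (hatx C) (flip i x)
          ≤ hammingDist (hatx C) x + hammingDist x (flip i x) :=
            hammingDist_triangle _ _ _
        _ ≤ τ + 1 := by rw [hflipdist]; omega
  have hUdist : ∀ (x : Fin n → Bool) (C : (Fin n → Bool) → Bool),
      C ∈ U x → hammingDist (hatx C) x ≤ τ := by
    intro x C hC
    by_contra h
    have h2 := hC.2 (hatx C) (by omega)
    have h3 := hhat C x hC.1
    rw [h2] at h3
    exact Bool.false_ne_true h3
  -- step A: privacy per coordinate
  have hkey : ∀ (x : Fin n → Bool) (i : Fin n),
      pr (M x) (S x i) ≤ E * pr (M (flip i x)) (T (flip i x) i) + δ := by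
    intro x i
    refine (hSDP x (flip i x) (hflipdist i x) (S x i)).trans ?_
    have h2 := mul_le_mul_of_nonneg_left (pr_mono (M (flip i x)) (hST x i)) hE0.le
    linarith
  -- step B: counting upper bound
  have hBsum : ∀ y : Fin n → Bool, ∑ i : Fin n, pr (M y) (T y i) ≤ (τ : ℝ) + 1 := by
    intro y
    have hs : ∀ i : Fin n, pr (M y) (T y i)
        = ∑ C : (Fin n → Bool) → Bool, if C ∈ T y i then ((M y) C).toReal else 0 :=
      fun i => pr_eq_sum _ _
    calc ∑ i : Fin n, pr (M y) (T y i)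
        = ∑ C : (Fin n → Bool) → Bool, ∑ i : Fin n,
            if C ∈ T y i then ((M y) C).toReal else 0 := by
          rw [← Finset.sum_comm]
          exact Finset.sum_congr rfl fun i _ => hs i
      _ ≤ ∑ C : (Fin n → Bool) → Bool, ((τ : ℝ) + 1) * ((M y) C).toReal := by
          refine Finset.sum_le_sum fun C _ => ?_
          rw [← Finset.sum_filter]
          rw [Finset.sum_const, nsmul_eq_mul]
          have hcard : ((Finset.univ.filter fun i => C ∈ T y i).card : ℝ) ≤ (τ : ℝ) + 1 := by
            by_cases hd : hammingDist (hatx C) y ≤ τ + 1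
            · have hsub : (Finset.univ.filter fun i => C ∈ T y i)
                  ⊆ Finset.univ.filter fun i => hatx C i ≠ y i := by
                intro i hi
                simp only [Finset.mem_filter, Finset.mem_univ, true_and] at hi ⊢
                exact hi.1
              have h2 : (Finset.univ.filter fun i => hatx C i ≠ y i).card
                  = hammingDist (hatx C) y := rfl
              have h3 : (Finset.univ.filter fun i => C ∈ T y i).card ≤ τ + 1 :=
                le_trans (Finset.card_le_card hsub) (le_of_eq_of_le h2 hd)
              exact_mod_cast h3
            · have : (Finset.univ.filter fun i => C ∈ T y i) = ∅ := by
                refine Finset.filter_eq_empty_iff.mpr fun i _ => ?_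
                intro hi
                exact hd hi.2
              rw [this]
              simp
              positivity
          have h0 : (0 : ℝ) ≤ ((M y) C).toReal := ENNReal.toReal_nonneg
          exact mul_le_mul_of_nonneg_right hcard h0
      _ = (τ : ℝ) + 1 := by
          rw [← Finset.mul_sum, sum_toReal_one, mul_one]
  -- step C: counting lower bound
  have hAsum : ∀ x : Fin n → Bool,
      ((n : ℝ) - τ) * α ≤ ∑ i : Fin n, pr (M x) (S x i) := by
    intro x
    have hs : ∀ i : Fin n, pr (M x) (S x i)
        = ∑ C : (Fin n → Bool) → Bool, if C ∈ S x i then ((M x) C).toReal else 0 :=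
      fun i => pr_eq_sum _ _
    have hswap : ∑ i : Fin n, pr (M x) (S x i)
        = ∑ C : (Fin n → Bool) → Bool, ∑ i : Fin n,
            if C ∈ S x i then ((M x) C).toReal else 0 := by
      rw [← Finset.sum_comm]
      exact Finset.sum_congr rfl fun i _ => hs i
    rw [hswap]
    have hlow : ∀ C : (Fin n → Bool) → Bool,
        (if C ∈ U x then ((n : ℝ) - τ) * ((M x) C).toReal else 0)
          ≤ ∑ i : Fin n, if C ∈ S x i then ((M x) C).toReal else 0 := by
      intro C
      by_cases hC : C ∈ U x
      · have hd := hUdist x C hC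
        rw [if_pos hC, ← Finset.sum_filter, Finset.sum_const, nsmul_eq_mul]
        have hfe : (Finset.univ.filter fun i => C ∈ S x i)
            = Finset.univ.filter fun i => hatx C i = x i := by
          refine Finset.filter_congr fun i _ => ?_
          simp only [hSdef, Set.mem_setOf_eq]
          exact ⟨fun h => h.1, fun h => ⟨h, hd⟩⟩
        have hcard : (Finset.univ.filter fun i => hatx C i = x i).card
            = n - hammingDist (hatx C) x := by
          have := Finset.card_filter_add_card_filter_not
            (s := (Finset.univ : Finset (Fin n))) (p := fun i => hatx C i = x i)
          have h2 : (Finset.univ.filter fun i => ¬ hatx C i = x i).card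
              = hammingDist (hatx C) x := rfl
          simp only [Finset.card_univ, Fintype.card_fin] at this
          omega
        have hge : ((n : ℝ) - τ) ≤ ((Finset.univ.filter fun i => C ∈ S x i).card : ℝ) := by
          rw [hfe, hcard]
          have hle : hammingDist (hatx C) x ≤ τ := hd
          have : (n - τ : ℕ) ≤ n - hammingDist (hatx C) x := by omega
          have hcast : ((n - τ : ℕ) : ℝ) = (n : ℝ) - τ := by
            rw [Nat.cast_sub hτn]
          rw [← hcast]
          exact_mod_cast this
        have h0 : (0 : ℝ) ≤ ((M x) C).toReal := ENNReal.toReal_nonneg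
        exact mul_le_mul_of_nonneg_right hge h0
      · rw [if_neg hC]
        refine Finset.sum_nonneg fun i _ => ?_
        split <;> positivity
    calc ((n : ℝ) - τ) * α
        ≤ ((n : ℝ) - τ) * pr (M x) (U x) := by
          have hτr : (τ : ℝ) ≤ (n : ℝ) := by exact_mod_cast hτn
          have hnt : (0 : ℝ) ≤ (n : ℝ) - τ := by linarith
          exact mul_le_mul_of_nonneg_left (hU x) hnt
      _ = ∑ C : (Fin n → Bool) → Bool,
            (if C ∈ U x then ((n : ℝ) - τ) * ((M x) C).toReal else 0) := by
          rw [pr_eq_sum, Finset.mul_sum]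
          refine Finset.sum_congr rfl fun C _ => ?_
          split <;> simp
      _ ≤ _ := Finset.sum_le_sum fun C _ => hlow C
  -- assemble
  have hNc0 : (0 : ℝ) < (Fintype.card (Fin n → Bool) : ℝ) := by
    exact_mod_cast Fintype.card_pos
  have hmain : (Fintype.card (Fin n → Bool) : ℝ) * (((n : ℝ) - τ) * α)
      ≤ E * ((Fintype.card (Fin n → Bool) : ℝ) * ((τ : ℝ) + 1))
        + (Fintype.card (Fin n → Bool) : ℝ) * ((n : ℝ) * δ) := by
    calc (Fintype.card (Fin n → Bool) : ℝ) * (((n : ℝ) - τ) * α)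
        = ∑ _x : Fin n → Bool, ((n : ℝ) - τ) * α := by
          rw [Finset.sum_const, Finset.card_univ, nsmul_eq_mul]
      _ ≤ ∑ x : Fin n → Bool, ∑ i : Fin n, pr (M x) (S x i) :=
          Finset.sum_le_sum fun x _ => hAsum x
      _ ≤ ∑ x : Fin n → Bool, ∑ i : Fin n,
            (E * pr (M (flip i x)) (T (flip i x) i) + δ) :=
          Finset.sum_le_sum fun x _ => Finset.sum_le_sum fun i _ => hkey x i
      _ = E * (∑ x : Fin n → Bool, ∑ i : Fin n, pr (M (flip i x)) (T (flip i x) i))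
            + (Fintype.card (Fin n → Bool) : ℝ) * ((n : ℝ) * δ) := by
          have hx : ∀ x : Fin n → Bool,
              ∑ i : Fin n, (E * pr (M (flip i x)) (T (flip i x) i) + δ)
                = E * ∑ i : Fin n, pr (M (flip i x)) (T (flip i x) i) + (n : ℝ) * δ := by
            intro x
            rw [Finset.sum_add_distrib, ← Finset.mul_sum, Finset.sum_const,
              Finset.card_univ, Fintype.card_fin, nsmul_eq_mul]
          rw [Finset.sum_congr rfl fun x _ => hx x, Finset.sum_add_distrib,
            ← Finset.mul_sum, Finset.sum_const, Finset.card_univ, nsmul_eq_mul]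
      _ ≤ E * ((Fintype.card (Fin n → Bool) : ℝ) * ((τ : ℝ) + 1))
            + (Fintype.card (Fin n → Bool) : ℝ) * ((n : ℝ) * δ) := by
          have hsum : ∑ x : Fin n → Bool, ∑ i : Fin n, pr (M (flip i x)) (T (flip i x) i)
              ≤ (Fintype.card (Fin n → Bool) : ℝ) * ((τ : ℝ) + 1) := by
            calc ∑ x : Fin n → Bool, ∑ i : Fin n, pr (M (flip i x)) (T (flip i x) i)
                = ∑ i : Fin n, ∑ x : Fin n → Bool, pr (M (flip i x)) (T (flip i x) i) :=
                  Finset.sum_comm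
              _ = ∑ i : Fin n, ∑ y : Fin n → Bool, pr (M y) (T y i) := by
                  refine Finset.sum_congr rfl fun i _ => ?_
                  exact Fintype.sum_bijective (flip i) (hflipbij i) _ _ (fun x => rfl)
              _ = ∑ y : Fin n → Bool, ∑ i : Fin n, pr (M y) (T y i) := Finset.sum_comm
              _ ≤ ∑ _y : Fin n → Bool, ((τ : ℝ) + 1) :=
                  Finset.sum_le_sum fun y _ => hBsum y
              _ = (Fintype.card (Fin n → Bool) : ℝ) * ((τ : ℝ) + 1) := by
                  rw [Finset.sum_const, Finset.card_univ, nsmul_eq_mul]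
          have h2 := mul_le_mul_of_nonneg_left hsum hE0.le
          linarith
  have hfinal : ((n : ℝ) - τ) * α ≤ E * ((τ : ℝ) + 1) + (n : ℝ) * δ := by
    have h2 : (Fintype.card (Fin n → Bool) : ℝ) * (((n : ℝ) - τ) * α)
        ≤ (Fintype.card (Fin n → Bool) : ℝ) * (E * ((τ : ℝ) + 1) + (n : ℝ) * δ) := by
      have hr : (Fintype.card (Fin n → Bool) : ℝ) * (E * ((τ : ℝ) + 1) + (n : ℝ) * δ)
          = E * ((Fintype.card (Fin n → Bool) : ℝ) * ((τ : ℝ) + 1))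
            + (Fintype.card (Fin n → Bool) : ℝ) * ((n : ℝ) * δ) := by ring
      linarith [hmain]
    exact le_of_mul_le_mul_left h2 hNc0
  -- final arithmetic contradiction
  have hτr : (τ : ℝ) ≤ (n : ℝ) ^ (0.9 : ℝ) := hτ
  have hKbound : α + 2 * E + 1 ≤ α / 2 * K := by
    have h1 : 2 * (α + 2 * E + 1) / α ≤ K := le_max_right _ _
    rw [div_le_iff₀ hα] at h1
    have : K * α = α * K := mul_comm _ _
    nlinarith [h1]
  have hτ0 : (0 : ℝ) ≤ (τ : ℝ) := Nat.cast_nonneg τ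
  have h09nn : (0 : ℝ) ≤ (n : ℝ) ^ (0.9 : ℝ) := by linarith
  have m1 : E * (τ : ℝ) ≤ E * (n : ℝ) ^ (0.9 : ℝ) :=
    mul_le_mul_of_nonneg_left hτr hE0.le
  have m2 : α * (τ : ℝ) ≤ α * (n : ℝ) ^ (0.9 : ℝ) :=
    mul_le_mul_of_nonneg_left hτr hα.le
  have m3 : E + 1 ≤ (E + 1) * (n : ℝ) ^ (0.9 : ℝ) := by
    have h := mul_le_mul_of_nonneg_left h09one (by linarith : (0:ℝ) ≤ E + 1)
    rw [mul_one] at h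
    exact h
  have e2 : α * (n : ℝ) ≤ (α + 2 * E + 1) * (n : ℝ) ^ (0.9 : ℝ) := by
    have hx : ((n : ℝ) - τ) * α = α * (n : ℝ) - α * τ := by ring
    have hy : (α + 2 * E + 1) * (n : ℝ) ^ (0.9 : ℝ)
        = α * (n : ℝ) ^ (0.9 : ℝ) + E * (n : ℝ) ^ (0.9 : ℝ)
          + (E + 1) * (n : ℝ) ^ (0.9 : ℝ) := by ring
    have hz : E * ((τ : ℝ) + 1) = E * (τ : ℝ) + E := by ring
    linarith [hfinal, hnδ, m1, m2, m3]
  have e3 : (α + 2 * E + 1) * (n : ℝ) ^ (0.9 : ℝ) ≤ (α / 2 * K) * (n : ℝ) ^ (0.9 : ℝ) :=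
    mul_le_mul_of_nonneg_right hKbound h09nn
  have e4 : (α / 2 * K) * (n : ℝ) ^ (0.9 : ℝ)
      ≤ (α / 2 * (n : ℝ) ^ (0.1 : ℝ)) * (n : ℝ) ^ (0.9 : ℝ) := by
    have : α / 2 * K ≤ α / 2 * (n : ℝ) ^ (0.1 : ℝ) :=
      mul_le_mul_of_nonneg_left hn01 (by linarith)
    exact mul_le_mul_of_nonneg_right this h09nn
  have e5 : (α / 2 * (n : ℝ) ^ (0.1 : ℝ)) * (n : ℝ) ^ (0.9 : ℝ) = α / 2 * (n : ℝ) := by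
    rw [mul_assoc, hsplit]
  have hpos : 0 < α * (n : ℝ) := mul_pos hα hn0
  linarith [e2, e3, e4, e5, hpos]
end
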